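/- Let V be a Banach space densely and continuously embedded in a Banach space E, P a metric space, and {A^{(μ)}(t)}_{t≥0}, μ∈P, families of linear operators in E each satisfying the hyperbolic conditions (Hyp1)–(Hyp3) with constants M, ω, M_V, ω_V independent of μ. For each μ let {R^{(μ)}(t,s)}_{t≥s≥0} be the evolution system determined by {A^{(μ)}(t)}_{t≥0}, i.e. the unique evolution system satisfying ‖R^{(μ)}(t,s)‖ ≤ M e^{ω(t−s)}, ∂⁺/∂t R^{(μ)}(t,s)v|_{t=s} = A^{(μ)}(s)v for v∈V, and ∂/∂s R^{(μ)}(t,s)v = −R^{(μ)}(t,s)A^{(μ)}(s)v for v∈V, 0≤s≤t. Then for all μ,ν∈P, v̄∈V and t≥s≥0: ‖R^{(ν)}(t,s)v̄ − R^{(μ)}(t,s)v̄‖ ≤ M M_V e^{(|ω|+|ω_V|)t} ‖v̄‖_V ∫_s^t ‖A^{(ν)}(r) − A^{(μ)}(r)‖_{L(V,E)} dr. -/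

import Mathlib

open MeasureTheory Filter Set Topology

/-- An evolution system on a Banach space `E`. -/
def IsEvolutionSystem {E : Type*} [NormedAddCommGroup E] [NormedSpace ℝ E]
    (R : ℝ → ℝ → E →L[ℝ] E) : Prop :=
  (∀ t : ℝ, 0 ≤ t → R t t = ContinuousLinearMap.id ℝ E) ∧
  (∀ t s r : ℝ, 0 ≤ r → r ≤ s → s ≤ t → (R t s).comp (R s r) = R t r) ∧
  (∀ u : E, ContinuousOn (fun p : ℝ × ℝ => R p.1 p.2 u) {p : ℝ × ℝ | 0 ≤ p.2 ∧ p.2 ≤ p.1})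

/-- A `C₀` semigroup of bounded linear operators on `E`. -/
def IsC0Semigroup {E : Type*} [NormedAddCommGroup E] [NormedSpace ℝ E]
    (S : ℝ → E →L[ℝ] E) : Prop :=
  S 0 = ContinuousLinearMap.id ℝ E ∧
  (∀ t s : ℝ, 0 ≤ t → 0 ≤ s → S (t + s) = (S t).comp (S s)) ∧
  (∀ u : E, ContinuousOn (fun t : ℝ => S t u) (Set.Ici 0))

/-- The composition `S(t_{n-1})(s_{n-1}) ∘ ⋯ ∘ S(t_0)(s_0)` of members of a two-parameter
family of operators. -/
def prodOps {E : Type*} [NormedAddCommGroup E] [NormedSpace ℝ E]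
    (S : ℝ → ℝ → E →L[ℝ] E) (t s : ℕ → ℝ) : ℕ → E →L[ℝ] E
  | 0 => ContinuousLinearMap.id ℝ E
  | n + 1 => (S (t n) (s n)).comp (prodOps S t s n)

/-- Stability of a family `{S(t)}_{t ≥ 0}` of semigroups with constants `M`, `ω`:
`‖S(tₙ)(sₙ) ⋯ S(t₁)(s₁)‖ ≤ M e^{ω(s₁+⋯+sₙ)}` for `0 ≤ t₁ ≤ ⋯ ≤ tₙ` and `sᵢ ≥ 0`. -/
def IsStableFamily {E : Type*} [NormedAddCommGroup E] [NormedSpace ℝ E]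
    (S : ℝ → ℝ → E →L[ℝ] E) (M ω : ℝ) : Prop :=
  ∀ (n : ℕ) (t s : ℕ → ℝ), (∀ i, 0 ≤ t i) → (∀ i j, i ≤ j → t i ≤ t j) → (∀ i, 0 ≤ s i) →
    ‖prodOps S t s n‖ ≤ M * Real.exp (ω * ∑ i ∈ Finset.range n, s i)

/-- The hyperbolic (Kato) conditions (Hyp1)–(Hyp3) for a family `{A(t)}_{t≥0}` of generators,
relative to a continuous dense embedding `ι : V → E`. Here `S t` is the `C₀` semigroup on `E`
generated by `A(t)`, `SV t` is its restriction to `V` (admissibility), and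
`A t : V →L[ℝ] E` is the restriction of `A(t)` to `V` (so that `V ⊆ D(A(t))`). -/
structure IsHyperbolicFamily {V E : Type*}
    [NormedAddCommGroup V] [NormedSpace ℝ V]
    [NormedAddCommGroup E] [NormedSpace ℝ E]
    (iota : V →L[ℝ] E) (A : ℝ → (V →L[ℝ] E))
    (S : ℝ → ℝ → E →L[ℝ] E) (SV : ℝ → ℝ → V →L[ℝ] V)
    (M om MV omV : ℝ) : Prop where
  /-- (Hyp1): each `S t` is a `C₀` semigroup on `E`. -/
  sem_E : ∀ t : ℝ, 0 ≤ t → IsC0Semigroup (S t)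
  /-- (Hyp1)/(Hyp3): `A(t)v` is the generator of `S t` applied to `v ∈ V`. -/
  gen_on_V : ∀ t : ℝ, 0 ≤ t → ∀ v : V,
    Filter.Tendsto (fun h : ℝ => h⁻¹ • (S t h (iota v) - iota v)) (nhdsWithin 0 (Set.Ioi 0))
      (nhds (A t v))
  /-- (Hyp1): stability on `E` with constants `M`, `ω`. -/
  stable_E : IsStableFamily S M om
  /-- (Hyp2): each restricted semigroup `SV t` is a `C₀` semigroup on `V`. -/
  sem_V : ∀ t : ℝ, 0 ≤ t → IsC0Semigroup (SV t)
  /-- (Hyp2): `V` is `A(t)`-admissible, `SV t` being the restriction of `S t` to `V`. -/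
  compat : ∀ t h : ℝ, 0 ≤ t → 0 ≤ h → ∀ v : V, iota (SV t h v) = S t h (iota v)
  /-- (Hyp2): stability on `V` with constants `M_V`, `ω_V`. -/
  stable_V : IsStableFamily SV MV omV
  /-- (Hyp3): `t ↦ A(t) ∈ L(V,E)` is norm continuous on `[0,∞)`. -/
  contA : ContinuousOn A (Set.Ici 0)

/-- `R` is the evolution system determined by the hyperbolic family `{A(t)}` (with
restriction data `ι`, constants `M`, `ω`): an evolution system satisfying the exponential
bound, the forward derivative identity at `t = s` and the backward derivative identity
on `V`. -/
def IsDeterminedEvolutionSystem {V E : Type*}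
    [NormedAddCommGroup V] [NormedSpace ℝ V]
    [NormedAddCommGroup E] [NormedSpace ℝ E]
    (iota : V →L[ℝ] E) (A : ℝ → (V →L[ℝ] E)) (M om : ℝ)
    (R : ℝ → ℝ → E →L[ℝ] E) : Prop :=
  IsEvolutionSystem R ∧
  (∀ t s : ℝ, 0 ≤ s → s ≤ t → ‖R t s‖ ≤ M * Real.exp (om * (t - s))) ∧
  (∀ s : ℝ, 0 ≤ s → ∀ v : V,
    Filter.Tendsto (fun h : ℝ => h⁻¹ • (R (s + h) s (iota v) - iota v))
      (nhdsWithin 0 (Set.Ioi 0)) (nhds (A s v))) ∧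
  (∀ t : ℝ, ∀ v : V, ∀ s ∈ Set.Icc (0:ℝ) t,
    HasDerivWithinAt (fun σ : ℝ => R t σ (iota v)) (-(R t s (A s v))) (Set.Icc 0 t) s)



section Aux

variable {E : Type*} [NormedAddCommGroup E] [NormedSpace ℝ E]

/-- FTC-style bound via right derivatives. -/
lemma norm_sub_le_integral_of_right_deriv {f : ℝ → E} {f' : ℝ → E} {ψ : ℝ → ℝ} {a b : ℝ}
    (hψ : Continuous ψ)
    (hf : ContinuousOn f (Icc a b))
    (hf' : ∀ x ∈ Ico a b, HasDerivWithinAt f (f' x) (Ici x) x)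
    (bound : ∀ x ∈ Ico a b, ‖f' x‖ ≤ ψ x) (hab : a ≤ b) :
    ‖f b - f a‖ ≤ ∫ x in a..b, ψ x := by
  set B : ℝ → ℝ := fun x => ∫ y in a..x, ψ y with hBdef
  have hB : ∀ x, HasDerivAt B (ψ x) x := fun x =>
    intervalIntegral.integral_hasDerivAt_right (hψ.intervalIntegrable _ _)
      (hψ.stronglyMeasurable.stronglyMeasurableAtFilter)
      hψ.continuousAt
  have key := image_norm_le_of_norm_deriv_right_le_deriv_boundary
    (f := fun x => f x - f a) (f' := f')
    (hf.sub continuousOn_const)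
    (fun x hx => by simpa using hf' x hx)
    (B := B) (B' := ψ)
    (by simp [hBdef]) hB bound
  simpa [hBdef] using key (right_mem_Icc.2 hab)

/-- Strong continuity of σ ↦ R t σ x on [0,t]. -/
lemma contR_snd {R : ℝ → ℝ → E →L[ℝ] E}
    (hcont : ∀ u : E, ContinuousOn (fun p : ℝ × ℝ => R p.1 p.2 u) {p : ℝ × ℝ | 0 ≤ p.2 ∧ p.2 ≤ p.1})
    (x : E) (t : ℝ) : ContinuousOn (fun σ => R t σ x) (Icc 0 t) := by
  intro σ hσ
  have h1 := (hcont x) (t, σ) ⟨hσ.1, hσ.2⟩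
  have hmap : MapsTo (fun σ : ℝ => ((t, σ) : ℝ × ℝ)) (Icc 0 t)
      {p : ℝ × ℝ | 0 ≤ p.2 ∧ p.2 ≤ p.1} := fun y hy => ⟨hy.1, hy.2⟩
  exact h1.comp ((continuous_const.prodMk continuous_id).continuousWithinAt) hmap

/-- Limit of R t y (c y) along a filter, moving point version. -/
lemma tendsto_R_moving {R : ℝ → ℝ → E →L[ℝ] E} {t r C : ℝ} {l : Filter ℝ} {c : ℝ → E} {d : E}
    (hC : ∀ σ ∈ Icc (0:ℝ) t, ‖R t σ‖ ≤ C)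
    (hRc : Tendsto (fun σ => R t σ d) (𝓝[Icc 0 t] r) (𝓝 (R t r d)))
    (hl : l ≤ 𝓝[Icc (0:ℝ) t] r)
    (hc : Tendsto c l (𝓝 d)) :
    Tendsto (fun y => R t y (c y)) l (𝓝 (R t r d)) := by
  have hmem : ∀ᶠ y in l, y ∈ Icc (0:ℝ) t := hl self_mem_nhdsWithin
  have h1 : Tendsto (fun y => R t y (c y - d)) l (𝓝 0) := by
    refine squeeze_zero_norm' (a := fun y => C * ‖c y - d‖) ?_ ?_
    · filter_upwards [hmem] with y hy
      calc ‖R t y (c y - d)‖ ≤ ‖R t y‖ * ‖c y - d‖ := (R t y).le_opNorm _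
        _ ≤ C * ‖c y - d‖ := by
          gcongr
          exact hC y hy
    · have : Tendsto (fun y => c y - d) l (𝓝 0) := by
        simpa using hc.sub (tendsto_const_nhds (x := d))
      simpa using (this.norm.const_mul C)
  have h2 : Tendsto (fun y => R t y d) l (𝓝 (R t r d)) := hRc.mono_left hl
  have h3 := h1.add h2
  rw [zero_add] at h3
  refine h3.congr fun y => ?_
  rw [← map_add]
  congr 1
  abel

end Aux



section Aux2

variable {V E : Type*} [NormedAddCommGroup V] [NormedSpace ℝ V]
  [NormedAddCommGroup E] [NormedSpace ℝ E]

/-- Right derivative of `y ↦ ι (SV τ (y - a) v₀)` at `r ≥ a`. -/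
lemma semigroup_right_deriv (iota : V →L[ℝ] E) (A : ℝ → (V →L[ℝ] E))
    (S : ℝ → ℝ → E →L[ℝ] E) (SV : ℝ → ℝ → V →L[ℝ] V)
    {τ a r : ℝ} (hτ : 0 ≤ τ) (ha : 0 ≤ a) (har : a ≤ r) (v₀ : V)
    (hsemV : ∀ x y : ℝ, 0 ≤ x → 0 ≤ y → SV τ (x + y) = (SV τ x).comp (SV τ y))
    (hcompat : ∀ h : ℝ, 0 ≤ h → ∀ v : V, iota (SV τ h v) = S τ h (iota v))
    (hgen : ∀ v : V, Tendsto (fun h : ℝ => h⁻¹ • (S τ h (iota v) - iota v))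
      (𝓝[>] (0:ℝ)) (𝓝 (A τ v))) :
    HasDerivWithinAt (fun y => iota (SV τ (y - a) v₀)) (A τ (SV τ (r - a) v₀)) (Ici r) r := by
  set v' := SV τ (r - a) v₀ with hv'
  rw [hasDerivWithinAt_iff_tendsto_slope, Ici_sdiff_left]
  have hmap : Tendsto (fun y => y - r) (𝓝[>] r) (𝓝[>] (0:ℝ)) := by
    apply tendsto_nhdsWithin_of_tendsto_nhds_of_eventually_within
    · have : Tendsto (fun y : ℝ => y - r) (𝓝 r) (𝓝 (r - r)) :=
        (continuous_id.sub continuous_const).tendsto r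
      rw [sub_self] at this
      exact this.mono_left nhdsWithin_le_nhds
    · filter_upwards [self_mem_nhdsWithin] with y hy
      exact sub_pos.2 (show r < y from hy)
  refine ((hgen v').comp hmap).congr' ?_
  filter_upwards [self_mem_nhdsWithin] with y (hy : r < y)
  have h1 : SV τ (y - a) v₀ = SV τ (y - r) v' := by
    rw [hv', show y - a = (y - r) + (r - a) by ring,
      hsemV (y - r) (r - a) (by linarith) (by linarith), ContinuousLinearMap.comp_apply]
  show (y - r)⁻¹ • (S τ (y - r) (iota v') - iota v') = slope (fun y => iota (SV τ (y - a) v₀)) r y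
  rw [slope_def_module, h1, hcompat (y - r) (by linarith) v']

/-- Right derivative of `y ↦ R t y (ι (u y))`. -/
lemma evolution_right_deriv (iota : V →L[ℝ] E) (A : ℝ → (V →L[ℝ] E))
    (R : ℝ → ℝ → E →L[ℝ] E) {t r C : ℝ} (hr0 : 0 ≤ r) (hrt : r < t)
    {u : ℝ → V} {d : E}
    (hC : ∀ σ ∈ Icc (0:ℝ) t, ‖R t σ‖ ≤ C)
    (hcont : ∀ x : E, ContinuousOn (fun p : ℝ × ℝ => R p.1 p.2 x) {p : ℝ × ℝ | 0 ≤ p.2 ∧ p.2 ≤ p.1})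
    (hbackward : ∀ v : V, ∀ s ∈ Set.Icc (0:ℝ) t,
      HasDerivWithinAt (fun σ : ℝ => R t σ (iota v)) (-(R t s (A s v))) (Set.Icc 0 t) s)
    (hu : HasDerivWithinAt (fun y => iota (u y)) d (Ici r) r) :
    HasDerivWithinAt (fun y => R t y (iota (u y)))
      (R t r d - R t r (A r (u r))) (Ici r) r := by
  have hll : 𝓝[Ioc r t] r = 𝓝[>] r := nhdsWithin_Ioc_eq_nhdsGT hrt
  have hsub : Ioc r t ⊆ Icc 0 t := fun y hy => ⟨hr0.trans hy.1.le, hy.2⟩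
  have hl : 𝓝[Ioc r t] r ≤ 𝓝[Icc (0:ℝ) t] r := nhdsWithin_mono _ hsub
  rw [hasDerivWithinAt_iff_tendsto_slope, Ici_sdiff_left] at hu ⊢
  rw [← hll] at hu ⊢
  -- term 1 : moving point
  have hT1 : Tendsto (fun y => R t y (slope (fun z => iota (u z)) r y))
      (𝓝[Ioc r t] r) (𝓝 (R t r d)) := by
    refine tendsto_R_moving hC ?_ hl hu
    exact (contR_snd hcont d t r ⟨hr0, hrt.le⟩).tendsto
  -- term 2 : backward derivative
  have hT2 : Tendsto (slope (fun σ => R t σ (iota (u r))) r)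
      (𝓝[Ioc r t] r) (𝓝 (-(R t r (A r (u r))))) := by
    have h := hbackward (u r) r ⟨hr0, hrt.le⟩
    rw [hasDerivWithinAt_iff_tendsto_slope] at h
    exact h.mono_left (nhdsWithin_mono _ (fun y hy => ⟨hsub hy, ne_of_gt hy.1⟩))
  have h3 := hT1.add hT2
  refine Tendsto.congr' ?_ (by convert h3 using 2; rw [sub_eq_add_neg])
  filter_upwards [self_mem_nhdsWithin] with y (hy : y ∈ Ioc r t)
  have hne : y - r ≠ 0 := sub_ne_zero.2 (ne_of_gt hy.1)
  simp only [slope_def_module, ContinuousLinearMap.map_smul, map_sub]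
  rw [← smul_add]
  congr 1
  abel

end Aux2

section Aux3

variable {V E : Type*} [NormedAddCommGroup V] [NormedSpace ℝ V]
  [NormedAddCommGroup E] [NormedSpace ℝ E]

/-- Key per-interval estimate: comparing the evolution system `Rρ` with a single
semigroup flow on `[a, b]`. -/
lemma interval_step (iota : V →L[ℝ] E) (Aμ Aρ : ℝ → (V →L[ℝ] E))
    (Sμ : ℝ → ℝ → E →L[ℝ] E) (SVμ : ℝ → ℝ → V →L[ℝ] V) (Rρ : ℝ → ℝ → E →L[ℝ] E)
    {t a b CE CV : ℝ} (w : V) (ψ : ℝ → ℝ)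
    (ha0 : 0 ≤ a) (hab : a ≤ b) (hbt : b ≤ t)
    (hCE : ∀ σ ∈ Icc (0:ℝ) t, ‖Rρ t σ‖ ≤ CE) (hCE0 : 0 ≤ CE)
    (hcontρ : ∀ x : E, ContinuousOn (fun p : ℝ × ℝ => Rρ p.1 p.2 x)
      {p : ℝ × ℝ | 0 ≤ p.2 ∧ p.2 ≤ p.1})
    (hbackρ : ∀ v : V, ∀ σ ∈ Icc (0:ℝ) t,
      HasDerivWithinAt (fun σ' : ℝ => Rρ t σ' (iota v)) (-(Rρ t σ (Aρ σ v))) (Icc 0 t) σ)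
    (hsemVμ : ∀ x y : ℝ, 0 ≤ x → 0 ≤ y → SVμ a (x + y) = (SVμ a x).comp (SVμ a y))
    (hSV0 : SVμ a 0 = ContinuousLinearMap.id ℝ V)
    (hSVcont : ∀ w' : V, ContinuousOn (fun h : ℝ => SVμ a h w') (Ici 0))
    (hcompat : ∀ h : ℝ, 0 ≤ h → ∀ v' : V, iota (SVμ a h v') = Sμ a h (iota v'))
    (hgen : ∀ v' : V, Tendsto (fun h : ℝ => h⁻¹ • (Sμ a h (iota v') - iota v'))
      (𝓝[>] (0:ℝ)) (𝓝 (Aμ a v')))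
    (hψ : Continuous ψ)
    (hCV : ∀ x ∈ Icc a b, ‖SVμ a (x - a) w‖ ≤ CV) (hCV0 : 0 ≤ CV)
    (hbound : ∀ x ∈ Ico a b, ‖Aρ x - Aμ a‖ ≤ ψ x) :
    ‖Rρ t b (iota (SVμ a (b - a) w)) - Rρ t a (iota w)‖ ≤
      ∫ x in a..b, CE * (ψ x * CV) := by
  set u : ℝ → V := fun x => SVμ a (x - a) w with hu
  set G : ℝ → E := fun x => Rρ t x (iota (u x)) with hG
  set g : ℝ → E := fun x => Rρ t x (Aμ a (u x)) - Rρ t x (Aρ x (u x)) with hg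
  have hIccsub : Icc a b ⊆ Icc (0:ℝ) t := fun x hx => ⟨ha0.trans hx.1, hx.2.trans hbt⟩
  -- continuity of u and G
  have hucont : ContinuousOn u (Icc a b) :=
    (hSVcont w).comp ((continuous_id.sub continuous_const).continuousOn)
      (fun x hx => sub_nonneg.2 hx.1)
  have hGcont : ContinuousOn G (Icc a b) := by
    intro x hx
    refine tendsto_R_moving (hCE) ((contR_snd hcontρ (iota (u x)) t) x (hIccsub hx)).tendsto
      (nhdsWithin_mono _ hIccsub) ?_
    exact (iota.continuous.comp_continuousOn hucont) x hx
  -- right derivatives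
  have hGderiv : ∀ x ∈ Ico a b, HasDerivWithinAt G (g x) (Ici x) x := by
    intro x hx
    have hx0 : 0 ≤ x := ha0.trans hx.1
    have hxt : x < t := lt_of_lt_of_le hx.2 hbt
    have hsg : HasDerivWithinAt (fun y => iota (SVμ a (y - a) w))
        (Aμ a (SVμ a (x - a) w)) (Ici x) x :=
      semigroup_right_deriv iota Aμ Sμ SVμ ha0 ha0 hx.1 w hsemVμ hcompat hgen
    exact evolution_right_deriv iota Aρ Rρ hx0 hxt hCE hcontρ
      (fun v' σ hσ => hbackρ v' σ hσ) hsg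
  -- bound on the derivative
  have hgbound : ∀ x ∈ Ico a b, ‖g x‖ ≤ CE * (ψ x * CV) := by
    intro x hx
    have h1 : g x = Rρ t x ((Aμ a - Aρ x) (u x)) := by
      rw [hg]
      simp only [ContinuousLinearMap.sub_apply, map_sub]
    rw [h1]
    calc ‖Rρ t x ((Aμ a - Aρ x) (u x))‖
        ≤ ‖Rρ t x‖ * ‖(Aμ a - Aρ x) (u x)‖ := (Rρ t x).le_opNorm _
      _ ≤ CE * (‖Aμ a - Aρ x‖ * ‖u x‖) := by
          refine mul_le_mul (hCE x ⟨ha0.trans hx.1, hx.2.le.trans hbt⟩)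
            ((Aμ a - Aρ x).le_opNorm _) (norm_nonneg _) hCE0
      _ ≤ CE * (ψ x * CV) := by
          refine mul_le_mul_of_nonneg_left ?_ hCE0
          refine mul_le_mul ?_ (hCV x ⟨hx.1, hx.2.le⟩) (norm_nonneg _)
            ((norm_nonneg _).trans (hbound x hx))
          rw [norm_sub_rev]; exact hbound x hx
  have hψ' : Continuous fun x => CE * (ψ x * CV) :=
    continuous_const.mul (hψ.mul continuous_const)
  have := norm_sub_le_integral_of_right_deriv hψ' hGcont hGderiv hgbound hab
  have hGa : G a = Rρ t a (iota w) := by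
    rw [hG]; simp only [hu, sub_self, hSV0, ContinuousLinearMap.id_apply]
  rw [hGa] at this
  exact this

end Aux3

lemma prodOps_congr {E : Type*} [NormedAddCommGroup E] [NormedSpace ℝ E]
    (S : ℝ → ℝ → E →L[ℝ] E) (t : ℕ → ℝ) {s s' : ℕ → ℝ} :
    ∀ n : ℕ, (∀ j < n, s j = s' j) → prodOps S t s n = prodOps S t s' n
  | 0, _ => rfl
  | n+1, h => by
      rw [prodOps, prodOps, h n (by omega), prodOps_congr S t n (fun j hj => h j (by omega))]

/-- Proposition 3.2(i): perturbation estimate for evolution systems determined by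
parameterized hyperbolic families with constants independent of the parameter. -/
theorem hyperbolic_evolution_systems_perturbation_estimate
    {V E : Type*} [NormedAddCommGroup V] [NormedSpace ℝ V] [CompleteSpace V]
    [NormedAddCommGroup E] [NormedSpace ℝ E] [CompleteSpace E]
    {P : Type*} [MetricSpace P]
    (iota : V →L[ℝ] E) (hinj : Function.Injective iota) (hdense : DenseRange iota)
    (A : P → ℝ → (V →L[ℝ] E)) (S : P → ℝ → ℝ → E →L[ℝ] E) (SV : P → ℝ → ℝ → V →L[ℝ] V)
    (M om MV omV : ℝ) (hM : 1 ≤ M) (hMV : 1 ≤ MV)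
    (hhyp : ∀ μ : P, IsHyperbolicFamily iota (A μ) (S μ) (SV μ) M om MV omV)
    (R : P → ℝ → ℝ → E →L[ℝ] E)
    (hdet : ∀ μ : P, IsDeterminedEvolutionSystem iota (A μ) M om (R μ)) :
    ∀ (μ ν : P) (v : V) (t s : ℝ), 0 ≤ s → s ≤ t →
      ‖R ν t s (iota v) - R μ t s (iota v)‖ ≤
        M * MV * Real.exp ((|om| + |omV|) * t) * ‖v‖ *
          ∫ r in s..t, ‖A ν r - A μ r‖ := by
  intro μ ν v t s hs hst
  have ht0 : 0 ≤ t := hs.trans hst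
  classical
  -- continuous extensions of the generator families
  have hAcont : ∀ ρ : P, Continuous fun r : ℝ => A ρ (max r 0) := fun ρ =>
    (hhyp ρ).contA.comp_continuous (continuous_id.max continuous_const)
      (fun x => Set.mem_Ici.2 (le_max_right _ _))
  set φ : ℝ → ℝ := fun r => ‖A ν (max r 0) - A μ (max r 0)‖ with hφdef
  have hφcont : Continuous φ := ((hAcont ν).sub (hAcont μ)).norm
  have hφeq : ∀ r : ℝ, 0 ≤ r → φ r = ‖A ν r - A μ r‖ := by
    intro r hr; simp only [hφdef, max_eq_left hr]
  have hintc : (∫ r in s..t, ‖A ν r - A μ r‖) = ∫ r in s..t, φ r := by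
    refine intervalIntegral.integral_congr fun r hr => ?_
    rw [uIcc_of_le hst] at hr
    exact (hφeq r (hs.trans hr.1)).symm
  rw [hintc]
  -- constants
  set CE : ℝ := M * Real.exp (|om| * t) with hCEdef
  have hCE0 : 0 ≤ CE := mul_nonneg (by linarith) (Real.exp_pos _).le
  have hCEbd : ∀ ρ : P, ∀ σ ∈ Icc (0:ℝ) t, ‖R ρ t σ‖ ≤ CE := by
    intro ρ σ hσ
    refine ((hdet ρ).2.1 t σ hσ.1 hσ.2).trans ?_
    refine mul_le_mul_of_nonneg_left (Real.exp_le_exp.2 ?_) (by linarith)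
    calc om * (t - σ) ≤ |om| * (t - σ) :=
          mul_le_mul_of_nonneg_right (le_abs_self om) (by linarith [hσ.2])
      _ ≤ |om| * t := mul_le_mul_of_nonneg_left (by linarith [hσ.1]) (abs_nonneg om)
  set CV : ℝ := MV * Real.exp (|omV| * t) * ‖v‖ with hCVdef
  have hCV0 : 0 ≤ CV :=
    mul_nonneg (mul_nonneg (by linarith) (Real.exp_pos _).le) (norm_nonneg _)
  set K : ℝ := CE * CV with hKdef
  have hK0 : 0 ≤ K := mul_nonneg hCE0 hCV0
  refine le_of_forall_pos_le_add fun ε' hε' => ?_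
  have hden : 0 < 2 * K * (t - s) + 1 := by
    have : 0 ≤ 2 * K * (t - s) := mul_nonneg (by linarith) (by linarith)
    linarith
  set ε : ℝ := ε' / (2 * K * (t - s) + 1) with hεdef
  have hε : 0 < ε := div_pos hε' hden
  -- uniform continuity of A μ on [s,t]
  obtain ⟨δ, hδ0, hδ⟩ : ∃ δ > 0, ∀ x ∈ Icc s t, ∀ y ∈ Icc s t,
      |x - y| ≤ δ → ‖A μ (max x 0) - A μ (max y 0)‖ ≤ ε := by
    have huc : UniformContinuousOn (fun r : ℝ => A μ (max r 0)) (Icc s t) :=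
      isCompact_Icc.uniformContinuousOn_of_continuous (hAcont μ).continuousOn
    rw [Metric.uniformContinuousOn_iff_le] at huc
    obtain ⟨δ, hδ0, hδ⟩ := huc ε hε
    exact ⟨δ, hδ0, fun x hx y hy hxy => by
      simpa [dist_eq_norm] using hδ x hx y hy (by simpa [Real.dist_eq] using hxy)⟩
  obtain ⟨n0, hn0⟩ := exists_nat_ge ((t - s) / δ)
  set N : ℕ := n0 + 1 with hNdef
  have hN0 : (0:ℝ) < (N:ℝ) := by positivity
  set Δ : ℝ := (t - s) / (N:ℝ) with hΔdef
  have hΔ0 : 0 ≤ Δ := div_nonneg (by linarith) hN0.le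
  have hΔδ : Δ ≤ δ := by
    rw [hΔdef, div_le_iff₀ hN0]
    have h1 : t - s ≤ n0 * δ := by
      have := (div_le_iff₀ hδ0).1 hn0
      linarith
    have h2 : (n0:ℝ) ≤ N := by exact_mod_cast Nat.le_succ n0
    nlinarith
  set r_ : ℕ → ℝ := fun i => s + i * Δ with hrdef
  have hrs : ∀ i : ℕ, s ≤ r_ i := fun i => by
    have : (0:ℝ) ≤ i * Δ := mul_nonneg (Nat.cast_nonneg i) hΔ0
    simp only [hrdef]; linarith
  have hr0 : ∀ i : ℕ, 0 ≤ r_ i := fun i => hs.trans (hrs i)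
  have hrmono : ∀ i j : ℕ, i ≤ j → r_ i ≤ r_ j := by
    intro i j hij
    simp only [hrdef]
    have h1 : (i:ℝ) ≤ j := Nat.cast_le.2 hij
    nlinarith
  have hrN : r_ N = t := by
    simp only [hrdef, hΔdef]
    field_simp
    ring
  have hrt : ∀ i ≤ N, r_ i ≤ t := fun i hi => hrN ▸ hrmono i N hi
  have hstep : ∀ i : ℕ, r_ (i+1) - r_ i = Δ := by
    intro i; simp only [hrdef]; push_cast; ring
  set vv : ℕ → V := fun i => prodOps (SV μ) r_ (fun _ => Δ) i v with hvvdef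
  have hvvsucc : ∀ i, vv (i+1) = SV μ (r_ i) Δ (vv i) := fun i => rfl
  have hvv0 : vv 0 = v := rfl
  have hr0eq : r_ 0 = s := by simp [hrdef]
  -- V-norm bound on the approximate flow
  have hwbound : ∀ i, i < N → ∀ x ∈ Icc (r_ i) (r_ (i+1)),
      ‖SV μ (r_ i) (x - r_ i) (vv i)‖ ≤ CV := by
    intro i hiN x hx
    set dur' : ℕ → ℝ := fun j => if j = i then x - r_ i else Δ with hdur'
    have hdnn : ∀ j, 0 ≤ dur' j := by
      intro j
      by_cases hj : j = i
      · simp only [hdur', hj, if_pos rfl]; exact sub_nonneg.2 hx.1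
      · simp only [hdur', if_neg hj]; exact hΔ0
    have hprod : SV μ (r_ i) (x - r_ i) (vv i) = prodOps (SV μ) r_ dur' (i+1) v := by
      have hcong : prodOps (SV μ) r_ dur' i = prodOps (SV μ) r_ (fun _ => Δ) i :=
        prodOps_congr _ _ i (fun j hj => by simp [hdur', Nat.ne_of_lt hj])
      show _ = ((SV μ (r_ i) (dur' i)).comp (prodOps (SV μ) r_ dur' i)) v
      rw [hcong]
      simp [hdur', hvvdef]
    have hsum : ∑ j ∈ Finset.range (i+1), dur' j = x - s := by
      rw [Finset.sum_range_succ]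
      have h2 : ∑ j ∈ Finset.range i, dur' j = i * Δ := by
        rw [Finset.sum_congr rfl (fun j hj => by
          simp [hdur', Nat.ne_of_lt (Finset.mem_range.1 hj)] : ∀ j ∈ Finset.range i, dur' j = Δ)]
        simp [Finset.sum_const, nsmul_eq_mul]
      rw [h2]
      simp only [hdur', if_pos rfl, hrdef]
      ring
    have hst' := (hhyp μ).stable_V (i+1) r_ dur' hr0 hrmono hdnn
    rw [hsum] at hst'
    have hxs : 0 ≤ x - s := by linarith [hrs i, hx.1]
    have hxt : x - s ≤ t := by
      have h3 := hrt (i+1) (Nat.succ_le_of_lt hiN)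
      have := hx.2; linarith
    calc ‖SV μ (r_ i) (x - r_ i) (vv i)‖ = ‖prodOps (SV μ) r_ dur' (i+1) v‖ := by rw [hprod]
      _ ≤ ‖prodOps (SV μ) r_ dur' (i+1)‖ * ‖v‖ := (prodOps (SV μ) r_ dur' (i+1)).le_opNorm v
      _ ≤ MV * Real.exp (omV * (x - s)) * ‖v‖ :=
          mul_le_mul_of_nonneg_right hst' (norm_nonneg v)
      _ ≤ CV := by
          rw [hCVdef]
          refine mul_le_mul_of_nonneg_right
            (mul_le_mul_of_nonneg_left (Real.exp_le_exp.2 ?_) (by linarith)) (norm_nonneg v)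
          calc omV * (x - s) ≤ |omV| * (x - s) :=
                mul_le_mul_of_nonneg_right (le_abs_self _) hxs
            _ ≤ |omV| * t := mul_le_mul_of_nonneg_left hxt (abs_nonneg _)
  -- the per-interval estimates
  have hstepint : ∀ (ρ : P) (ψ : ℝ → ℝ), Continuous ψ → ∀ i, i < N →
      (∀ x ∈ Ico (r_ i) (r_ (i+1)), ‖A ρ x - A μ (r_ i)‖ ≤ ψ x) →
      ‖R ρ t (r_ (i+1)) (iota (vv (i+1))) - R ρ t (r_ i) (iota (vv i))‖ ≤
        ∫ x in (r_ i)..(r_ (i+1)), CE * (ψ x * CV) := by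
    intro ρ ψ hψ i hiN hb
    have hsemμ := (hhyp μ).sem_V (r_ i) (hr0 i)
    have key := interval_step iota (A μ) (A ρ) (S μ) (SV μ) (R ρ)
      (t := t) (a := r_ i) (b := r_ (i+1)) (CE := CE) (CV := CV) (vv i) ψ
      (hr0 i) (hrmono i (i+1) (Nat.le_succ i)) (hrt (i+1) (Nat.succ_le_of_lt hiN))
      (hCEbd ρ) hCE0 ((hdet ρ).1.2.2)
      (fun v' σ hσ => (hdet ρ).2.2.2 t v' σ hσ)
      (fun x y hx hy => hsemμ.2.1 x y hx hy) hsemμ.1 hsemμ.2.2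
      (fun h hh v' => (hhyp μ).compat (r_ i) h (hr0 i) hh v')
      ((hhyp μ).gen_on_V (r_ i) (hr0 i))
      hψ (hwbound i hiN) hCV0 hb
    rwa [hstep i, ← hvvsucc i] at key
  -- bounds on the generators over the subintervals
  have hmemIcc : ∀ i, i < N → ∀ x ∈ Ico (r_ i) (r_ (i+1)),
      x ∈ Icc s t ∧ r_ i ∈ Icc s t ∧ |x - r_ i| ≤ δ := by
    intro i hiN x hx
    have h1 := hrt (i+1) (Nat.succ_le_of_lt hiN)
    have h2 := hrs i
    have h3 := hrt i (Nat.le_of_lt hiN)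
    refine ⟨⟨h2.trans hx.1, hx.2.le.trans h1⟩, ⟨h2, h3⟩, ?_⟩
    rw [abs_of_nonneg (by linarith [hx.1])]
    have := hstep i
    linarith [hx.2]
  have hbμ : ∀ i, i < N → ∀ x ∈ Ico (r_ i) (r_ (i+1)), ‖A μ x - A μ (r_ i)‖ ≤ ε := by
    intro i hiN x hx
    obtain ⟨hx1, hx2, hx3⟩ := hmemIcc i hiN x hx
    have := hδ x hx1 (r_ i) hx2 hx3
    rwa [max_eq_left (hs.trans hx1.1), max_eq_left (hr0 i)] at this
  have hbν : ∀ i, i < N → ∀ x ∈ Ico (r_ i) (r_ (i+1)),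
      ‖A ν x - A μ (r_ i)‖ ≤ φ x + ε := by
    intro i hiN x hx
    obtain ⟨hx1, _, _⟩ := hmemIcc i hiN x hx
    calc ‖A ν x - A μ (r_ i)‖ ≤ ‖A ν x - A μ x‖ + ‖A μ x - A μ (r_ i)‖ :=
          norm_sub_le_norm_sub_add_norm_sub _ _ _
      _ ≤ φ x + ε := by
          rw [hφeq x (hs.trans hx1.1)]
          exact add_le_add le_rfl (hbμ i hiN x hx)
  -- telescoping
  have htel : ∀ (ρ : P) (bnd : ℕ → ℝ),
      (∀ i, i < N → ‖R ρ t (r_ (i+1)) (iota (vv (i+1))) - R ρ t (r_ i) (iota (vv i))‖ ≤ bnd i) →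
      ‖R ρ t (r_ N) (iota (vv N)) - R ρ t (r_ 0) (iota (vv 0))‖ ≤
        ∑ i ∈ Finset.range N, bnd i := by
    intro ρ bnd hbnd
    rw [← Finset.sum_range_sub (fun i => R ρ t (r_ i) (iota (vv i))) N]
    exact (norm_sum_le _ _).trans
      (Finset.sum_le_sum (fun i hi => hbnd i (Finset.mem_range.1 hi)))
  have hsumμ : ∑ i ∈ Finset.range N, ∫ x in (r_ i)..(r_ (i+1)),
      CE * ((fun _ : ℝ => ε) x * CV) = ∫ x in s..t, CE * (ε * CV) := by
    rw [intervalIntegral.sum_integral_adjacent_intervals (f := fun x => CE * ((fun _ : ℝ => ε) x * CV))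
      (fun k _ => (continuous_const.mul (continuous_const.mul continuous_const)).intervalIntegrable _ _)]
    rw [hr0eq, hrN]
  have hsumν : ∑ i ∈ Finset.range N, ∫ x in (r_ i)..(r_ (i+1)),
      CE * ((φ x + ε) * CV) = ∫ x in s..t, CE * ((φ x + ε) * CV) := by
    rw [intervalIntegral.sum_integral_adjacent_intervals (f := fun x => CE * ((φ x + ε) * CV))
      (fun k _ => (continuous_const.mul ((hφcont.add continuous_const).mul
        continuous_const)).intervalIntegrable _ _)]
    rw [hr0eq, hrN]
  have hNμ := htel μ _ (fun i hiN => hstepint μ (fun _ => ε) continuous_const i hiN (hbμ i hiN))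
  have hNν := htel ν _ (fun i hiN => hstepint ν (fun x => φ x + ε)
    (hφcont.add continuous_const) i hiN (hbν i hiN))
  rw [hsumμ] at hNμ
  rw [hsumν] at hNν
  -- assembling
  have hRtt : ∀ ρ : P, R ρ t t = ContinuousLinearMap.id ℝ E := fun ρ => (hdet ρ).1.1 t ht0
  have hdecomp : R ν t s (iota v) - R μ t s (iota v) =
      (R ν t (r_ 0) (iota (vv 0)) - R ν t (r_ N) (iota (vv N))) +
      (R μ t (r_ N) (iota (vv N)) - R μ t (r_ 0) (iota (vv 0))) := by
    rw [hr0eq, hrN, hvv0, hRtt ν, hRtt μ]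
    simp only [ContinuousLinearMap.id_apply]
    abel
  have hmain : ‖R ν t s (iota v) - R μ t s (iota v)‖ ≤
      (∫ x in s..t, CE * ((φ x + ε) * CV)) + ∫ x in s..t, CE * (ε * CV) := by
    rw [hdecomp]
    refine (norm_add_le _ _).trans (add_le_add ?_ hNμ)
    rw [norm_sub_rev]
    exact hNν
  -- computing the integrals
  have hφint : IntervalIntegrable φ volume s t := hφcont.intervalIntegrable _ _
  have hcomp1 : (∫ x in s..t, CE * ((φ x + ε) * CV)) =
      K * (∫ x in s..t, φ x) + K * ε * (t - s) := by
    have heq : ∀ x : ℝ, CE * ((φ x + ε) * CV) = K * φ x + K * ε := fun x => by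
      rw [hKdef]; ring
    simp_rw [heq]
    rw [intervalIntegral.integral_add (hφint.const_mul K) (intervalIntegrable_const),
      intervalIntegral.integral_const_mul, intervalIntegral.integral_const]
    simp only [smul_eq_mul]
    ring
  have hcomp2 : (∫ x in s..t, CE * (ε * CV)) = K * ε * (t - s) := by
    rw [intervalIntegral.integral_const]
    simp only [smul_eq_mul, hKdef]
    ring
  rw [hcomp1, hcomp2] at hmain
  have hKeq : M * MV * Real.exp ((|om| + |omV|) * t) * ‖v‖ = K := by
    rw [hKdef, hCEdef, hCVdef, show (|om| + |omV|) * t = |om| * t + |omV| * t from by ring,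
      Real.exp_add]
    ring
  rw [hKeq]
  have hεbd : 2 * K * (t - s) * ε ≤ ε' := by
    rw [hεdef]
    calc 2 * K * (t - s) * (ε' / (2 * K * (t - s) + 1))
        ≤ (2 * K * (t - s) + 1) * (ε' / (2 * K * (t - s) + 1)) := by
          refine mul_le_mul_of_nonneg_right (by linarith) (div_nonneg hε'.le hden.le)
      _ = ε' := mul_div_cancel₀ _ (ne_of_gt hden)
  linarith [hmain]
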